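/- For real ω > 0 and real α > 0, (e^{-ω α²}/(2πi)) ∫_{-∞}^∞ e^{-ω t²} / (t − iα) dt = (1/2)·erfc(α√ω), where erfc z = (2/√π) ∫_z^∞ e^{-s²} ds. -/

import Mathlib

open MeasureTheory Real Set Filter

/-- The complementary error function `erfc x = (2/√π) ∫_x^∞ e^{-s²} ds`. -/
noncomputable def erfc (x : ℝ) : ℝ :=
  (2 / Real.sqrt π) * ∫ s in Set.Ioi x, Real.exp (-s ^ 2)

lemma integral_cexp_neg_mul_Ioi' {z : ℂ} (hz : 0 < z.re) :
    ∫ s in Set.Ioi (0:ℝ), Complex.exp (-z * s) = z⁻¹ := by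
  have hz0 : z ≠ 0 := fun h => by simp [h] at hz
  have hbound : IntegrableOn (fun s : ℝ => Real.exp (-z.re * s)) (Set.Ioi 0) :=
    exp_neg_integrableOn_Ioi 0 hz
  have hmeas : AEStronglyMeasurable (fun s : ℝ => Complex.exp (-z * s))
      (volume.restrict (Set.Ioi 0)) := by
    apply Continuous.aestronglyMeasurable; fun_prop
  have hint : IntegrableOn (fun s : ℝ => Complex.exp (-z * s)) (Set.Ioi 0) := by
    refine hbound.mono' hmeas (ae_of_all _ fun s => ?_)
    rw [Complex.norm_exp]
    simp [Complex.mul_re]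
  have h1 : Tendsto (fun T : ℝ => ∫ s in (0:ℝ)..T, Complex.exp (-z * s)) atTop
      (nhds (∫ s in Set.Ioi (0:ℝ), Complex.exp (-z * s))) :=
    intervalIntegral_tendsto_integral_Ioi 0 hint tendsto_id
  have h2 : Tendsto (fun T : ℝ => ∫ s in (0:ℝ)..T, Complex.exp (-z * s)) atTop (nhds z⁻¹) := by
    have heq : ∀ T : ℝ, ∫ s in (0:ℝ)..T, Complex.exp (-z * s)
        = (Complex.exp (-z * T) - 1) / (-z) := by
      intro T
      rw [integral_exp_mul_complex (neg_ne_zero.mpr hz0)]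
      norm_num
    simp_rw [heq]
    have hlim : Tendsto (fun T : ℝ => Complex.exp (-z * T)) atTop (nhds 0) := by
      rw [tendsto_zero_iff_norm_tendsto_zero]
      have : ∀ T : ℝ, ‖Complex.exp (-z * T)‖ = Real.exp (-(z.re * T)) := by
        intro T
        rw [Complex.norm_exp]
        simp [Complex.mul_re]
      simp_rw [this]
      exact Real.tendsto_exp_neg_atTop_nhds_zero.comp
        (Tendsto.const_mul_atTop hz tendsto_id)
    have := (hlim.sub (tendsto_const_nhds (x := (1:ℂ)))).div_const (-z)
    simpa [div_neg, neg_div, neg_neg, one_div] using this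
  exact tendsto_nhds_unique h1 h2

lemma integral_Ioi_add' (g : ℝ → ℝ) (a c : ℝ) :
    ∫ x in Set.Ioi a, g (x + c) = ∫ x in Set.Ioi (a + c), g x := by
  rw [← integral_indicator measurableSet_Ioi, ← integral_indicator measurableSet_Ioi,
    ← integral_add_right_eq_self (Set.indicator (Set.Ioi (a + c)) g) c]
  congr 1; ext x
  simp only [Set.indicator_apply, Set.mem_Ioi]
  by_cases h : a < x
  · rw [if_pos h, if_pos (by linarith)]
  · rw [if_neg h, if_neg (by intro hh; exact h (by linarith))]

lemma inv_sub_rep (a t : ℝ) (ha : 0 < a) :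
    ((t:ℂ) - Complex.I * a)⁻¹
      = Complex.I * ∫ s in Set.Ioi (0:ℝ), Complex.exp (-((a:ℂ) + Complex.I * t) * s) := by
  rw [integral_cexp_neg_mul_Ioi' (by simpa using ha : (0:ℝ) < ((a:ℂ) + Complex.I * t).re)]
  rw [show (t:ℂ) - Complex.I * a = -Complex.I * ((a:ℂ) + Complex.I * t) by
    rw [neg_mul, mul_add, ← mul_assoc, Complex.I_mul_I]; ring]
  rw [mul_inv, inv_neg, Complex.inv_I, neg_neg]

lemma prod_integrable' (a : ℝ) (ha : 0 < a) :
    Integrable (Function.uncurry fun t s : ℝ =>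
      Complex.exp (-(t:ℂ)^2) * Complex.exp (-((a:ℂ) + Complex.I * t) * s))
      (volume.prod (volume.restrict (Set.Ioi 0))) := by
  have hb : Integrable (fun p : ℝ × ℝ => Real.exp (-p.1^2) * Real.exp (-a * p.2))
      (volume.prod (volume.restrict (Set.Ioi 0))) := by
    have h1 : Integrable (fun t : ℝ => Real.exp (-t^2)) volume := by
      simpa using integrable_exp_neg_mul_sq (one_pos)
    have h2 : Integrable (fun s : ℝ => Real.exp (-a * s)) (volume.restrict (Set.Ioi 0)) :=
      exp_neg_integrableOn_Ioi 0 ha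
    exact h1.mul_prod h2
  refine hb.mono' ?_ (ae_of_all _ fun p => ?_)
  · apply Continuous.aestronglyMeasurable; fun_prop
  · rw [Function.uncurry, norm_mul, Complex.norm_exp, Complex.norm_exp]
    apply le_of_eq
    congr 1
    · congr 1
      simp [← Complex.ofReal_pow]
    · congr 1
      simp [Complex.mul_re]

lemma core (a : ℝ) (ha : 0 < a) :
    Complex.exp (-(a^2 : ℝ)) * ∫ t : ℝ, Complex.exp (-(t:ℂ)^2) / ((t:ℂ) - Complex.I * a)
      = 2 * (Real.sqrt π : ℂ) * Complex.I * ((∫ u in Set.Ioi a, Real.exp (-u^2) : ℝ) : ℂ) := by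
  -- Step 1: rewrite the integrand using the exponential representation of the pole
  have h1 : ∫ t : ℝ, Complex.exp (-(t:ℂ)^2) / ((t:ℂ) - Complex.I * a)
      = Complex.I * ∫ t : ℝ, ∫ s in Set.Ioi (0:ℝ),
          Complex.exp (-(t:ℂ)^2) * Complex.exp (-((a:ℂ) + Complex.I * t) * s) := by
    rw [← integral_const_mul]
    refine integral_congr_ae (Filter.Eventually.of_forall fun t => ?_)
    dsimp only
    rw [div_eq_mul_inv, inv_sub_rep a t ha, integral_const_mul]
    ring
  -- Step 2: swap the order of integration
  have h2 : ∫ t : ℝ, ∫ s in Set.Ioi (0:ℝ),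
        Complex.exp (-(t:ℂ)^2) * Complex.exp (-((a:ℂ) + Complex.I * t) * s)
      = ∫ s in Set.Ioi (0:ℝ), ∫ t : ℝ,
        Complex.exp (-(t:ℂ)^2) * Complex.exp (-((a:ℂ) + Complex.I * t) * s) :=
    integral_integral_swap (prod_integrable' a ha)
  -- Step 3: compute the inner Gaussian integral
  have h3 : ∀ s : ℝ, ∫ t : ℝ, Complex.exp (-(t:ℂ)^2) * Complex.exp (-((a:ℂ) + Complex.I * t) * s)
      = (Real.sqrt π : ℂ) * (Complex.exp (-(a:ℂ) * s) * Complex.exp (-(s:ℂ)^2 / 4)) := by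
    intro s
    have heq : ∀ t : ℝ, Complex.exp (-(t:ℂ)^2) * Complex.exp (-((a:ℂ) + Complex.I * t) * s)
        = Complex.exp (-(a:ℂ) * s) *
          Complex.exp ((-1) * (t:ℂ)^2 + (-(Complex.I * s)) * t + 0) := by
      intro t
      rw [← Complex.exp_add, ← Complex.exp_add]
      congr 1; ring
    simp_rw [heq]
    rw [integral_const_mul, integral_cexp_quadratic (by norm_num : (-1:ℂ).re < 0)]
    have hpi : ((π:ℝ) / -(-1) : ℂ) ^ (1/2 : ℂ) = (Real.sqrt π : ℂ) := by
      rw [show ((π:ℝ) / -(-1) : ℂ) = ((π:ℝ):ℂ) by norm_num,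
        show (1/2 : ℂ) = ((1/2 : ℝ):ℂ) by norm_num,
        ← Complex.ofReal_cpow pi_pos.le, Real.rpow_def_of_pos pi_pos]
      rw [Real.sqrt_eq_rpow, Real.rpow_def_of_pos pi_pos]
    rw [hpi]
    have : (0 : ℂ) - (-(Complex.I * s))^2 / (4 * (-1)) = -(s:ℂ)^2 / 4 := by
      rw [show (-(Complex.I * (s:ℂ)))^2 = Complex.I^2 * (s:ℂ)^2 by ring, Complex.I_sq]; ring
    rw [this]; ring
  rw [h1, h2]
  simp_rw [h3]
  -- Step 4: pull constants out and combine exponentials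
  have h4 : ∀ s : ℝ, s ∈ Set.Ioi (0:ℝ) →
      Complex.exp (-(a^2:ℝ)) * (Complex.exp (-(a:ℂ) * s) * Complex.exp (-(s:ℂ)^2 / 4))
        = ((Real.exp (-(s/2 + a)^2) : ℝ) : ℂ) := by
    intro s _
    rw [← Complex.exp_add, ← Complex.exp_add, Complex.ofReal_exp]
    congr 1
    push_cast
    ring
  calc Complex.exp (-(a^2:ℝ)) * (Complex.I * ∫ s in Set.Ioi (0:ℝ),
        (Real.sqrt π : ℂ) * (Complex.exp (-(a:ℂ) * s) * Complex.exp (-(s:ℂ)^2 / 4)))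
      = Complex.I * (Real.sqrt π : ℂ) * ∫ s in Set.Ioi (0:ℝ),
          Complex.exp (-(a^2:ℝ)) * (Complex.exp (-(a:ℂ) * s) * Complex.exp (-(s:ℂ)^2 / 4)) := by
        rw [integral_const_mul, integral_const_mul]
        ring
    _ = Complex.I * (Real.sqrt π : ℂ) *
          ((∫ s in Set.Ioi (0:ℝ), Real.exp (-(s/2 + a)^2) : ℝ) : ℂ) := by
        rw [setIntegral_congr_fun measurableSet_Ioi h4]
        congr 1
        exact integral_ofReal
    _ = 2 * (Real.sqrt π : ℂ) * Complex.I * ((∫ u in Set.Ioi a, Real.exp (-u^2) : ℝ) : ℂ) := by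
        have hsub : ∫ s in Set.Ioi (0:ℝ), Real.exp (-(s/2 + a)^2)
            = 2 * ∫ u in Set.Ioi a, Real.exp (-u^2) := by
          have := integral_comp_mul_left_Ioi (fun x => Real.exp (-(x + a)^2)) 0
            (by norm_num : (0:ℝ) < 2⁻¹)
          simp only [mul_zero, smul_eq_mul, inv_inv] at this
          have heq : ∀ s : ℝ, Real.exp (-(s/2 + a)^2) = Real.exp (-(2⁻¹ * s + a)^2) := by
            intro s; rw [div_eq_inv_mul]
          simp_rw [heq, this]
          rw [integral_Ioi_add' (fun u => Real.exp (-u^2)) 0 a, zero_add]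
        rw [hsub]
        push_cast
        ring

theorem van_der_waerden_pole_integral (ω α : ℝ) (hω : 0 < ω) (hα : 0 < α) :
    Complex.exp (-(ω * α ^ 2 : ℝ)) / (2 * π * Complex.I) *
        ∫ t : ℝ, Complex.exp (-(ω * t ^ 2 : ℝ)) / ((t : ℂ) - Complex.I * α) =
      ((1 : ℂ) / 2) * (erfc (α * Real.sqrt ω) : ℝ) := by
  set c := Real.sqrt ω with hc
  have hc0 : 0 < c := Real.sqrt_pos.mpr hω
  have hc2 : c * c = ω := Real.mul_self_sqrt hω.le
  set a := α * c with hadef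
  have ha : 0 < a := mul_pos hα hc0
  -- change of variables t = u / c
  have hscale : ∫ t : ℝ, Complex.exp (-(ω * t ^ 2 : ℝ)) / ((t : ℂ) - Complex.I * α)
      = ∫ u : ℝ, Complex.exp (-(u:ℂ)^2) / ((u:ℂ) - Complex.I * a) := by
    have key := MeasureTheory.Measure.integral_comp_mul_left
      (fun t : ℝ => Complex.exp (-(ω * t ^ 2 : ℝ)) / ((t : ℂ) - Complex.I * α)) c⁻¹
    rw [inv_inv, abs_of_pos hc0] at key
    have hpt : ∀ u : ℝ, Complex.exp (-(ω * (c⁻¹ * u) ^ 2 : ℝ)) / (((c⁻¹ * u : ℝ) : ℂ) - Complex.I * α)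
        = (c : ℂ) * (Complex.exp (-(u:ℂ)^2) / ((u:ℂ) - Complex.I * a)) := by
      intro u
      have h1 : (ω * (c⁻¹ * u) ^ 2 : ℝ) = u ^ 2 := by
        field_simp
        rw [← hc2]; ring
      rw [h1]
      have hcC : ((c:ℝ):ℂ) ≠ 0 := by exact_mod_cast hc0.ne'
      have h2 : (((c⁻¹ * u : ℝ)) : ℂ) - Complex.I * α
          = ((c:ℂ))⁻¹ * ((u:ℂ) - Complex.I * a) := by
        rw [hadef]
        push_cast
        field_simp
      rw [h2]
      push_cast
      field_simp
    simp_rw [hpt] at key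
    rw [integral_const_mul] at key
    rw [Complex.real_smul] at key
    have hcC : (c : ℂ) ≠ 0 := by exact_mod_cast hc0.ne'
    exact (mul_left_cancel₀ hcC key).symm
  have ha2 : (ω * α ^ 2 : ℝ) = a ^ 2 := by rw [hadef]; rw [← hc2]; ring
  rw [hscale, ha2]
  have hcore := core a ha
  have hdiv : Complex.exp (-(a ^ 2 : ℝ)) / (2 * (π:ℂ) * Complex.I) *
      ∫ u : ℝ, Complex.exp (-(u:ℂ)^2) / ((u:ℂ) - Complex.I * a)
      = (2 * (Real.sqrt π : ℂ) * Complex.I * ((∫ u in Set.Ioi a, Real.exp (-u^2) : ℝ) : ℂ)) /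
        (2 * (π:ℂ) * Complex.I) := by
    rw [← hcore]; ring
  rw [hdiv]
  rw [show (erfc a : ℂ) = (2 / (Real.sqrt π : ℂ)) * ((∫ u in Set.Ioi a, Real.exp (-u^2) : ℝ) : ℂ) by
    rw [erfc]; push_cast; ring]
  have hsπ : (Real.sqrt π : ℂ) * (Real.sqrt π : ℂ) = (π : ℂ) := by
    rw [← Complex.ofReal_mul, Real.mul_self_sqrt pi_pos.le]
  have hsπ0 : (Real.sqrt π : ℂ) ≠ 0 := by
    exact_mod_cast (Real.sqrt_pos.mpr pi_pos).ne'
  have hπ0 : (π : ℂ) ≠ 0 := by exact_mod_cast pi_pos.ne'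
  field_simp
  rw [← hsπ]
  ring
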